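/- Let 1 ≤ d < n be integers, Q ∈ ℝ^{d×(n−d)}, and let α ≥ β > (n−d)/2 satisfy d/(2α) + (n−d)/(2β) < 1 and α > d/2. Then there exists a constant C > 0, independent of K and L, such that for all positive integers K, L and every k ∈ 𝒦_{K,L}, Σ_{m ∈ ℤ^n ∖ {0}} ( ‖k_I + 2K m_I + Q(k_II + 2L m_II)‖^{2α} + ‖k_II + 2L m_II‖^{2β} )^{−1} ≤ C (K^{−2α} + L^{−2β}), where m = (m_I, m_II) with m_I ∈ ℤ^d and m_II ∈ ℤ^{n−d}; in particular every summand is finite because the quantity in parentheses is strictly positive for m ≠ 0 and k ∈ 𝒦_{K,L}. -/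

import Mathlib

open scoped ENNReal

/-- Euclidean norm of a vector in `ℝ^m`. -/
noncomputable def euclNorm {m : ℕ} (x : Fin m → ℝ) : ℝ :=
  ‖(EuclideanSpace.equiv (Fin m) ℝ).symm x‖

/-- Mixed weight `‖k_I + Q k_II‖^(2α) + ‖k_II‖^(2β)` (real powers, `0⁰ = 1`). -/
noncomputable def wMix (d m : ℕ) (Q : Matrix (Fin d) (Fin m) ℝ) (α β : ℝ)
    (k : Fin (d + m) → ℤ) : ℝ :=
  euclNorm ((fun i => (k (Fin.castAdd m i) : ℝ)) +
      Q.mulVec fun j => (k (Fin.natAdd d j) : ℝ)) ^ (2 * α) +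
    euclNorm (fun j => (k (Fin.natAdd d j) : ℝ)) ^ (2 * β)

/-- Membership in the parallelogram index set `𝒦_{K,L}`:
each component of `k_I + Q k_II` lies in `[-K, K)` and each component of `k_II` in `[-L, L)`. -/
def memK (d m : ℕ) (Q : Matrix (Fin d) (Fin m) ℝ) (K L : ℕ) (k : Fin (d + m) → ℤ) : Prop :=
  (∀ i : Fin d,
      -(K : ℝ) ≤ (k (Fin.castAdd m i) : ℝ) + Q.mulVec (fun j => (k (Fin.natAdd d j) : ℝ)) i ∧
      (k (Fin.castAdd m i) : ℝ) + Q.mulVec (fun j => (k (Fin.natAdd d j) : ℝ)) i < (K : ℝ)) ∧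
  (∀ j : Fin m, -(L : ℤ) ≤ k (Fin.natAdd d j) ∧ k (Fin.natAdd d j) < (L : ℤ))

/-- The shifted index `(k_I + 2K v_I, k_II + 2L v_II)`. -/
def shiftIdx (d m K L : ℕ) (k v : Fin (d + m) → ℤ) : Fin (d + m) → ℤ :=
  Fin.append (fun i => k (Fin.castAdd m i) + 2 * (K : ℤ) * v (Fin.castAdd m i))
    fun j => k (Fin.natAdd d j) + 2 * (L : ℤ) * v (Fin.natAdd d j)

namespace Stmt14Aux

/-- Euclidean norm of an integer vector. -/
noncomputable def nE {n : ℕ} (w : Fin n → ℤ) : ℝ := euclNorm (fun i => (w i : ℝ))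

lemma euclNorm_eq {n : ℕ} (x : Fin n → ℝ) :
    euclNorm x = Real.sqrt (∑ i, x i ^ 2) := by
  rw [euclNorm, EuclideanSpace.norm_eq]
  congr 1
  refine Finset.sum_congr rfl fun i _ => ?_
  rw [Real.norm_eq_abs, sq_abs]
  rfl

lemma euclNorm_nonneg {n : ℕ} (x : Fin n → ℝ) : 0 ≤ euclNorm x := norm_nonneg _

lemma euclNorm_zero {n : ℕ} : euclNorm (0 : Fin n → ℝ) = 0 := by
  simp [euclNorm_eq]

lemma coord_le_euclNorm {n : ℕ} (x : Fin n → ℝ) (i : Fin n) : |x i| ≤ euclNorm x := by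
  rw [euclNorm_eq, ← Real.sqrt_sq_eq_abs]
  exact Real.sqrt_le_sqrt (Finset.single_le_sum (fun j _ => sq_nonneg (x j)) (Finset.mem_univ i))

lemma euclNorm_smul_le {n : ℕ} {c : ℝ} (hc : 0 ≤ c) {z u : Fin n → ℝ}
    (h : ∀ i, c * |z i| ≤ |u i|) : c * euclNorm z ≤ euclNorm u := by
  rw [euclNorm_eq, euclNorm_eq]
  calc c * Real.sqrt (∑ i, z i ^ 2) = Real.sqrt (∑ i, (c * |z i|) ^ 2) := by
        simp_rw [mul_pow, sq_abs, ← Finset.mul_sum, Real.sqrt_mul (sq_nonneg c), Real.sqrt_sq hc]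
    _ ≤ Real.sqrt (∑ i, u i ^ 2) := by
        apply Real.sqrt_le_sqrt
        apply Finset.sum_le_sum fun i _ => ?_
        rw [← sq_abs (u i)]
        exact pow_le_pow_left₀ (by positivity) (h i) 2

lemma nE_nonneg {n : ℕ} (w : Fin n → ℤ) : 0 ≤ nE w := euclNorm_nonneg _

lemma nE_zero {n : ℕ} : nE (0 : Fin n → ℤ) = 0 := by
  rw [nE, show (fun i => (((0 : Fin n → ℤ) i : ℝ))) = (0 : Fin n → ℝ) by funext i; simp]
  exact euclNorm_zero

lemma one_le_nE {n : ℕ} {w : Fin n → ℤ} (hw : w ≠ 0) : 1 ≤ nE w := by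
  obtain ⟨i, hi⟩ : ∃ i, w i ≠ 0 := by
    by_contra h; push_neg at h; exact hw (funext h)
  calc (1:ℝ) ≤ |(w i : ℝ)| := by
        rw [← Int.cast_abs]; exact_mod_cast Int.one_le_abs hi
    _ ≤ nE w := coord_le_euclNorm (fun j => (w j : ℝ)) i

lemma nE_pos {n : ℕ} {w : Fin n → ℤ} (hw : w ≠ 0) : 0 < nE w :=
  lt_of_lt_of_le one_pos (one_le_nE hw)

lemma comp1 {x c : ℝ} (h1 : -c ≤ x) (h2 : x < c) (z : ℤ) :
    c * |(z : ℝ)| ≤ |x + 2 * c * z| := by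
  have hc : 0 ≤ c := by nlinarith
  rcases eq_or_ne z 0 with rfl | hz
  · simp
  · have h1' : (1:ℝ) ≤ |(z:ℝ)| := by
      rw [← Int.cast_abs]; exact_mod_cast Int.one_le_abs hz
    have key : |(2 * c * (z:ℝ))| ≤ |x + 2 * c * z| + |x| := by
      calc |(2 * c * (z:ℝ))| = |(x + 2 * c * z) + (-x)| := by ring_nf
        _ ≤ |x + 2 * c * z| + |(-x)| := abs_add_le _ _
        _ = |x + 2 * c * z| + |x| := by rw [abs_neg]
    have h2cz : |(2 * c * (z:ℝ))| = 2 * c * |(z:ℝ)| := by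
      rw [abs_mul, abs_of_nonneg (by positivity)]
    have hx : |x| ≤ c := abs_le.2 ⟨h1, h2.le⟩
    nlinarith [abs_nonneg (x + 2 * c * z)]

lemma comp2 {c : ℝ} (hc : 0 < c) (x : ℝ) (z : ℤ) :
    c * |((z + round (x / (2 * c)) : ℤ) : ℝ)| ≤ |x + 2 * c * z| := by
  set s : ℝ := x / (2 * c) with hs
  have hx : x = 2 * c * s := by rw [hs]; field_simp
  have hround : |s - (round s : ℝ)| ≤ 1 / 2 := abs_sub_round s
  rcases eq_or_ne (z + round s) 0 with h0 | hne
  · rw [h0]; simp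
  · have h1 : (1:ℝ) ≤ |((z + round s : ℤ) : ℝ)| := by
      rw [← Int.cast_abs]; exact_mod_cast Int.one_le_abs hne
    have hcast : |((z + round s : ℤ) : ℝ)| = |(z : ℝ) + (round s : ℝ)| := by push_cast; ring_nf
    have key : |(z : ℝ) + (round s : ℝ)| ≤ |s + z| + |s - round s| := by
      calc |(z : ℝ) + (round s : ℝ)| = |(s + z) - (s - round s)| := by ring_nf
        _ ≤ |s + z| + |s - round s| := abs_sub _ _
    have habs : |x + 2 * c * z| = 2 * c * |s + z| := by
      rw [hx, show 2 * c * s + 2 * c * (z:ℝ) = 2 * c * (s + z) by ring, abs_mul,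
        abs_of_nonneg (by positivity)]
    rw [habs, hcast]
    nlinarith [abs_nonneg (s + (z:ℝ))]

lemma geom_le {A T t : ℝ} (hA : 0 ≤ A) (hT : 0 ≤ T) (ht : 0 < t) (ht1 : t < 1) :
    A ^ t * T ^ (1 - t) ≤ A + T := by
  rcases hA.eq_or_lt with rfl | hA'
  · rw [Real.zero_rpow ht.ne', zero_mul]; linarith
  rcases hT.eq_or_lt with rfl | hT'
  · rw [Real.zero_rpow (by linarith : 1 - t ≠ 0), mul_zero]; linarith
  have hM : 0 < max A T := lt_max_of_lt_left hA'
  calc A ^ t * T ^ (1 - t) ≤ (max A T) ^ t * (max A T) ^ (1 - t) := by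
        apply mul_le_mul (Real.rpow_le_rpow hA (le_max_left _ _) ht.le)
          (Real.rpow_le_rpow hT (le_max_right _ _) (by linarith))
          (Real.rpow_nonneg hT _) (Real.rpow_nonneg (le_of_lt hM) _)
    _ = max A T := by rw [← Real.rpow_add hM]; norm_num
    _ ≤ A + T := max_le (by linarith) (by linarith)

lemma tsum_pi_prod (f : ℤ → ℝ≥0∞) : ∀ dim : ℕ,
    (∑' w : Fin dim → ℤ, ∏ i, f (w i)) = (∑' z : ℤ, f z) ^ dim := by
  intro dim
  induction dim with
  | zero =>
    rw [pow_zero]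
    rw [show (fun w : Fin 0 → ℤ => ∏ i, f (w i)) = fun _ => 1 by funext w; simp]
    exact tsum_eq_single default fun b' hb' => absurd (Subsingleton.elim b' default) hb'
  | succ n ih =>
    have he := ((Fin.consEquiv (fun _ : Fin (n+1) => ℤ)).tsum_eq
      (f := fun w : Fin (n+1) → ℤ => ∏ i, f (w i))).symm
    rw [he, ENNReal.tsum_prod']
    have hterm : ∀ (z : ℤ) (w : Fin n → ℤ),
        (∏ i, f ((Fin.consEquiv (fun _ : Fin (n+1) => ℤ)) (z, w) i)) = f z * ∏ i, f (w i) := by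
      intro z w
      rw [Fin.prod_univ_succ]
      congr 1
    simp_rw [hterm, ENNReal.tsum_mul_left, ih, ENNReal.tsum_mul_right, pow_succ, mul_comm]

lemma oneDim {s : ℝ} (hs : 1 < s) :
    (∑' z : ℤ, ENNReal.ofReal ((max |(z:ℝ)| 1) ^ (-s))) < ⊤ := by
  have hsum : Summable fun z : ℤ => |(z:ℝ)| ^ (-s) := Real.summable_abs_int_rpow hs
  have hmono : ∀ z : ℤ, ENNReal.ofReal ((max |(z:ℝ)| 1) ^ (-s)) ≤
      ENNReal.ofReal (|(z:ℝ)| ^ (-s)) + (if z = 0 then 1 else 0) := by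
    intro z
    rcases eq_or_ne z 0 with rfl | hz
    · simp
    · have : max |(z:ℝ)| 1 = |(z:ℝ)| := max_eq_left (by
        rw [← Int.cast_abs]; exact_mod_cast Int.one_le_abs hz)
      simp [this, hz]
  calc (∑' z : ℤ, ENNReal.ofReal ((max |(z:ℝ)| 1) ^ (-s)))
      ≤ ∑' z : ℤ, (ENNReal.ofReal (|(z:ℝ)| ^ (-s)) + (if z = 0 then 1 else 0)) :=
        ENNReal.tsum_le_tsum hmono
    _ = (∑' z : ℤ, ENNReal.ofReal (|(z:ℝ)| ^ (-s))) + ∑' z : ℤ, (if z = 0 then (1:ℝ≥0∞) else 0) :=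
        ENNReal.tsum_add
    _ < ⊤ := by
        rw [← ENNReal.ofReal_tsum_of_nonneg (fun z => Real.rpow_nonneg (abs_nonneg _) _) hsum,
          tsum_eq_single 0 (fun b' hb' => if_neg hb')]
        simp

/-- Sum over nonzero lattice points of `‖w‖^(-r)`. -/
noncomputable def Z (dim : ℕ) (r : ℝ) : ℝ≥0∞ :=
  ∑' w : Fin dim → ℤ, if w = 0 then 0 else ENNReal.ofReal (nE w ^ (-r))

lemma Z_lt_top {dim : ℕ} (hdim : 1 ≤ dim) {r : ℝ} (hr : (dim : ℝ) < r) : Z dim r < ⊤ := by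
  have hdim' : (0:ℝ) < dim := by exact_mod_cast hdim
  set s : ℝ := r / dim with hs
  have hs1 : 1 < s := by rw [hs, lt_div_iff₀ hdim']; linarith
  have key : ∀ w : Fin dim → ℤ, w ≠ 0 →
      nE w ^ (-r) ≤ ∏ i, (max |(w i : ℝ)| 1) ^ (-s) := by
    intro w hw
    have hM : 1 ≤ nE w := one_le_nE hw
    have hfac : ∀ i, 0 < max |(w i : ℝ)| 1 := fun i => lt_max_of_lt_right one_pos
    have hP : 0 < ∏ i, max |(w i : ℝ)| 1 := Finset.prod_pos fun i _ => hfac i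
    have hPM : (∏ i, max |(w i : ℝ)| 1) ≤ nE w ^ dim := by
      calc (∏ i, max |(w i : ℝ)| 1) ≤ ∏ _i : Fin dim, nE w :=
            Finset.prod_le_prod (fun i _ => (hfac i).le)
              (fun i _ => max_le ((coord_le_euclNorm (fun j => ((w j : ℝ))) i)) hM)
        _ = nE w ^ dim := by rw [Finset.prod_const, Finset.card_univ, Fintype.card_fin]
    have h1 : nE w ^ (-r) = (nE w ^ dim : ℝ) ^ (-s) := by
      rw [← Real.rpow_natCast (nE w) dim, ← Real.rpow_mul (by linarith : (0:ℝ) ≤ nE w)]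
      rw [hs]
      rw [mul_comm (↑dim : ℝ) (-(r/↑dim))]
      congr 1
      field_simp
    rw [h1, Real.finset_prod_rpow _ _ (fun i _ => (hfac i).le)]
    exact Real.rpow_le_rpow_of_nonpos hP hPM (by linarith)
  have hbound : ∀ w : Fin dim → ℤ,
      (if w = 0 then 0 else ENNReal.ofReal (nE w ^ (-r))) ≤
        ∏ i, ENNReal.ofReal ((max |(w i : ℝ)| 1) ^ (-s)) := by
    intro w
    rcases eq_or_ne w 0 with rfl | hw
    · simp
    · rw [if_neg hw, ← ENNReal.ofReal_prod_of_nonneg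
        (fun i _ => Real.rpow_nonneg (le_max_of_le_right zero_le_one) _)]
      exact ENNReal.ofReal_le_ofReal (key w hw)
  calc Z dim r ≤ ∑' w : Fin dim → ℤ, ∏ i, ENNReal.ofReal ((max |(w i : ℝ)| 1) ^ (-s)) :=
        ENNReal.tsum_le_tsum hbound
    _ = (∑' z : ℤ, ENNReal.ofReal ((max |(z:ℝ)| 1) ^ (-s))) ^ dim :=
        tsum_pi_prod (fun z => ENNReal.ofReal ((max |(z:ℝ)| 1) ^ (-s))) dim
    _ < ⊤ := ENNReal.pow_lt_top (oneDim hs1)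

/-- The pairing equivalence, with the `m`-part first. -/
def pairEquiv (d m : ℕ) : (Fin m → ℤ) × (Fin d → ℤ) ≃ (Fin (d + m) → ℤ) where
  toFun p := Fin.append p.2 p.1
  invFun v := (fun j => v (Fin.natAdd d j), fun i => v (Fin.castAdd m i))
  left_inv p := by
    ext x
    · simp [Fin.append_right]
    · simp [Fin.append_left]
  right_inv v := by
    funext i
    refine Fin.addCases (fun i => ?_) (fun j => ?_) i
    · simp [Fin.append_left]
    · simp [Fin.append_right]

lemma append_eq_zero_iff {d m : ℕ} {a : Fin d → ℤ} {b : Fin m → ℤ} :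
    Fin.append a b = 0 ↔ a = 0 ∧ b = 0 := by
  constructor
  · intro h
    constructor
    · funext i
      have := congrFun h (Fin.castAdd m i)
      simpa [Fin.append_left] using this
    · funext j
      have := congrFun h (Fin.natAdd d j)
      simpa [Fin.append_right] using this
  · rintro ⟨rfl, rfl⟩
    funext i
    refine Fin.addCases (fun i => ?_) (fun j => ?_) i
    · simp [Fin.append_left]
    · simp [Fin.append_right]

lemma shiftIdx_append {d m K L : ℕ} (k : Fin (d + m) → ℤ) (vI : Fin d → ℤ) (vII : Fin m → ℤ) :
    shiftIdx d m K L k (Fin.append vI vII) =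
      Fin.append (fun i => k (Fin.castAdd m i) + 2 * (K : ℤ) * vI i)
        (fun j => k (Fin.natAdd d j) + 2 * (L : ℤ) * vII j) := by
  unfold shiftIdx
  simp only [Fin.append_left, Fin.append_right]

lemma wMix_append {d m : ℕ} (Q : Matrix (Fin d) (Fin m) ℝ) (α β : ℝ)
    (A : Fin d → ℤ) (B : Fin m → ℤ) :
    wMix d m Q α β (Fin.append A B) =
      euclNorm ((fun i => (A i : ℝ)) + Q.mulVec fun j => (B j : ℝ)) ^ (2 * α) +
        euclNorm (fun j => (B j : ℝ)) ^ (2 * β) := by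
  unfold wMix
  simp only [Fin.append_left, Fin.append_right]

lemma inv_rpow_rpow_split {a b e s : ℝ} (ha : 0 < a) (hb : 0 < b) :
    (((a * b) ^ e) ^ s)⁻¹ = a ^ (-(e * s)) * b ^ (-(e * s)) := by
  rw [← Real.rpow_mul (by positivity), ← Real.rpow_neg (by positivity),
    Real.mul_rpow ha.le hb.le]

lemma tsum_ite_zero {G : Type*} [DecidableEq G] (f : G → ℝ≥0∞) (b : G) :
    ∑' x, f x = f b + ∑' x, if x = b then 0 else f x := by
  rw [ENNReal.tsum_eq_add_tsum_ite b]
  congr 1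
  refine tsum_congr fun x => ?_
  by_cases h : x = b <;> simp [h]

end Stmt14Aux

open Stmt14Aux

/-- there is `C > 0` independent of `K, L` such that for every `k ∈ 𝒦_{K,L}`
the quantity `g(k,v) = ‖k_I + 2K v_I + Q(k_II + 2L v_II)‖^(2α) + ‖k_II + 2L v_II‖^(2β)` is
strictly positive for `v ≠ 0` and `Σ_{v ≠ 0} g(k,v)⁻¹ ≤ C (K^{-2α} + L^{-2β})`. -/
theorem stmt14 (d m : ℕ) (hd : 1 ≤ d) (hm : 1 ≤ m)
    (Q : Matrix (Fin d) (Fin m) ℝ) (α β : ℝ)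
    (hβ : (m : ℝ) / 2 < β) (hαβ : β ≤ α) (hα : (d : ℝ) / 2 < α)
    (hcond : (d : ℝ) / (2 * α) + (m : ℝ) / (2 * β) < 1) :
    ∃ C : ℝ, 0 < C ∧ ∀ K L : ℕ, 0 < K → 0 < L →
      ∀ k : Fin (d + m) → ℤ, memK d m Q K L k →
        (∀ v : Fin (d + m) → ℤ, v ≠ 0 → 0 < wMix d m Q α β (shiftIdx d m K L k v)) ∧
        (∑' v : {v : Fin (d + m) → ℤ // v ≠ 0},
            ENNReal.ofReal ((wMix d m Q α β (shiftIdx d m K L k v.1))⁻¹)) ≤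
          ENNReal.ofReal (C * ((K : ℝ) ^ (-(2 * α)) + (L : ℝ) ^ (-(2 * β)))) := by
  classical
  have hd0 : (0:ℝ) < d := by exact_mod_cast hd
  have hm0 : (0:ℝ) < m := by exact_mod_cast hm
  have hα0 : (0:ℝ) < α := lt_trans (by positivity) hα
  have hβ0 : (0:ℝ) < β := lt_trans (by positivity) hβ
  have hlo : (0:ℝ) < d / (2 * α) := by positivity
  have hmo : (0:ℝ) < m / (2 * β) := by positivity
  set t : ℝ := (d / (2 * α) + (1 - m / (2 * β))) / 2 with ht_def
  have hgap : (d:ℝ) / (2 * α) < 1 - m / (2 * β) := by linarith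
  have htlo : (d:ℝ) / (2 * α) < t := by rw [ht_def]; linarith
  have hthi : t < 1 - (m:ℝ) / (2 * β) := by rw [ht_def]; linarith
  have ht0 : 0 < t := lt_trans hlo htlo
  have ht1 : t < 1 := by linarith
  set p : ℝ := 2 * α * t with hp_def
  set q : ℝ := 2 * β * (1 - t) with hq_def
  have hpd : (d:ℝ) < p := by
    rw [hp_def]
    have := (div_lt_iff₀ (by positivity : (0:ℝ) < 2 * α)).mp htlo
    linarith
  have hqm : (m:ℝ) < q := by
    rw [hq_def]
    have h' : (m:ℝ) / (2 * β) < 1 - t := by linarith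
    have := (div_lt_iff₀ (by positivity : (0:ℝ) < 2 * β)).mp h'
    linarith
  have h2αd : (d:ℝ) < 2 * α := by linarith
  have h2βm : (m:ℝ) < 2 * β := by linarith
  have hZ1 := Z_lt_top hd h2αd
  have hZ2 := Z_lt_top hm h2βm
  have hZ3 := Z_lt_top hd hpd
  have hZ4 := Z_lt_top hm hqm
  set E0 : ℝ≥0∞ := Z d (2 * α) + Z m (2 * β) + Z d p * Z m q with hE0_def
  have hE0 : E0 ≠ ⊤ := by
    rw [hE0_def]
    exact (ENNReal.add_lt_top.mpr
      ⟨ENNReal.add_lt_top.mpr ⟨hZ1, hZ2⟩, ENNReal.mul_lt_top hZ3 hZ4⟩).ne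
  refine ⟨E0.toReal + 1, by positivity, ?_⟩
  intro K L hK hL k hk
  have hK' : (0:ℝ) < K := by exact_mod_cast hK
  have hL' : (0:ℝ) < L := by exact_mod_cast hL
  -- real vectors after shifting
  set bR : (Fin m → ℤ) → (Fin m → ℝ) :=
    fun vII j => ((k (Fin.natAdd d j) + 2 * (L:ℤ) * vII j : ℤ) : ℝ) with hbR_def
  set aR : (Fin d → ℤ) → (Fin m → ℤ) → (Fin d → ℝ) :=
    fun vI vII => (fun i => ((k (Fin.castAdd m i) + 2 * (K:ℤ) * vI i : ℤ) : ℝ)) +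
      Q.mulVec (bR vII) with haR_def
  have hwk : ∀ (vI : Fin d → ℤ) (vII : Fin m → ℤ),
      wMix d m Q α β (shiftIdx d m K L k (Fin.append vI vII)) =
        euclNorm (aR vI vII) ^ (2 * α) + euclNorm (bR vII) ^ (2 * β) := by
    intro vI vII
    rw [shiftIdx_append, wMix_append]
  -- lower bound for the second block
  have hbLow : ∀ vII : Fin m → ℤ, (L:ℝ) * nE vII ≤ euclNorm (bR vII) := by
    intro vII
    apply euclNorm_smul_le hL'.le
    intro j
    have h1 : -(L:ℝ) ≤ (k (Fin.natAdd d j) : ℝ) := by exact_mod_cast (hk.2 j).1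
    have h2 : (k (Fin.natAdd d j) : ℝ) < (L:ℝ) := by exact_mod_cast (hk.2 j).2
    have : bR vII j = (k (Fin.natAdd d j) : ℝ) + 2 * (L:ℝ) * (vII j : ℝ) := by
      rw [hbR_def]; push_cast; ring
    rw [this]
    exact comp1 h1 h2 (vII j)
  -- lower bound for the first block when `vII = 0`
  have hbR0 : bR 0 = fun j => ((k (Fin.natAdd d j) : ℝ)) := by
    funext j; rw [hbR_def]; simp
  have haLow0 : ∀ vI : Fin d → ℤ, (K:ℝ) * nE vI ≤ euclNorm (aR vI 0) := by
    intro vI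
    apply euclNorm_smul_le hK'.le
    intro i
    have h1 := (hk.1 i).1
    have h2 := (hk.1 i).2
    have : aR vI 0 i = ((k (Fin.castAdd m i) : ℝ) +
        Q.mulVec (fun j => (k (Fin.natAdd d j) : ℝ)) i) + 2 * (K:ℝ) * (vI i : ℝ) := by
      simp only [haR_def, hbR0, Pi.add_apply]; push_cast; ring
    rw [this]
    exact comp1 h1 h2 (vI i)
  -- lower bound for the first block for general `vII`, after translation
  have haLowN : ∀ vII : Fin m → ℤ, ∃ nn : Fin d → ℤ,
      ∀ vI : Fin d → ℤ, (K:ℝ) * nE (vI + nn) ≤ euclNorm (aR vI vII) := by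
    intro vII
    set c : Fin d → ℝ := fun i => (k (Fin.castAdd m i) : ℝ) + Q.mulVec (bR vII) i with hc_def
    refine ⟨fun i => round (c i / (2 * (K:ℝ))), fun vI => ?_⟩
    apply euclNorm_smul_le hK'.le
    intro i
    have : aR vI vII i = c i + 2 * (K:ℝ) * (vI i : ℝ) := by
      simp only [haR_def, hc_def, Pi.add_apply]; push_cast; ring
    rw [this]
    have h := comp2 hK' (c i) (vI i)
    simpa using h
  constructor
  · -- positivity
    intro v hv
    set vI : Fin d → ℤ := fun i => v (Fin.castAdd m i) with hvI_def
    set vII : Fin m → ℤ := fun j => v (Fin.natAdd d j) with hvII_def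
    have hv' : Fin.append vI vII = v := (pairEquiv d m).apply_symm_apply v
    rw [← hv', hwk vI vII]
    by_cases hII : vII = 0
    · have hI : vI ≠ 0 := by
        intro h
        apply hv
        rw [← hv', h, hII]
        exact append_eq_zero_iff.mpr ⟨rfl, rfl⟩
      have h1 : 0 < euclNorm (aR vI vII) := by
        rw [hII]
        exact lt_of_lt_of_le (mul_pos hK' (nE_pos hI)) (haLow0 vI)
      exact add_pos_of_pos_of_nonneg (Real.rpow_pos_of_pos h1 _)
        (Real.rpow_nonneg (euclNorm_nonneg _) _)
    · have h2 : 0 < euclNorm (bR vII) :=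
        lt_of_lt_of_le (by nlinarith [nE_pos hII] : (0:ℝ) < (L:ℝ) * nE vII) (hbLow vII)
      exact add_pos_of_nonneg_of_pos (Real.rpow_nonneg (euclNorm_nonneg _) _)
        (Real.rpow_pos_of_pos h2 _)
  · -- the sum estimate
    set F : (Fin (d + m) → ℤ) → ℝ≥0∞ := fun v =>
      if v = 0 then 0 else ENNReal.ofReal ((wMix d m Q α β (shiftIdx d m K L k v))⁻¹) with hF_def
    set X : ℝ≥0∞ := ENNReal.ofReal ((K:ℝ) ^ (-(2*α)) + (L:ℝ) ^ (-(2*β))) with hX_def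
    have h2a0 : (0:ℝ) < 2*α := by linarith
    have h2b0 : (0:ℝ) < 2*β := by linarith
    have step1 : (∑' v : {v : Fin (d + m) → ℤ // v ≠ 0},
        ENNReal.ofReal ((wMix d m Q α β (shiftIdx d m K L k v.1))⁻¹)) = ∑' v, F v := by
      refine Eq.trans (tsum_subtype {v : Fin (d + m) → ℤ | v ≠ 0}
        (fun v => ENNReal.ofReal ((wMix d m Q α β (shiftIdx d m K L k v))⁻¹)))
        (tsum_congr fun v => ?_)
      by_cases h : v = 0 <;> simp [h, hF_def, Set.indicator_apply]
    have step2 : (∑' v, F v) =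
        ∑' (vII : Fin m → ℤ), ∑' (vI : Fin d → ℤ), F (Fin.append vI vII) := by
      calc (∑' v, F v) = ∑' pp : (Fin m → ℤ) × (Fin d → ℤ), F (pairEquiv d m pp) :=
            ((pairEquiv d m).tsum_eq F).symm
        _ = ∑' (vII : Fin m → ℤ) (vI : Fin d → ℤ), F (pairEquiv d m (vII, vI)) :=
            ENNReal.tsum_prod'
        _ = ∑' (vII : Fin m → ℤ) (vI : Fin d → ℤ), F (Fin.append vI vII) := rfl
    have inner0 : (∑' vI : Fin d → ℤ, F (Fin.append vI 0)) ≤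
        ENNReal.ofReal ((K:ℝ) ^ (-(2*α))) * Z d (2*α) := by
      rw [Z, ← ENNReal.tsum_mul_left]
      refine ENNReal.tsum_le_tsum fun vI => ?_
      rcases eq_or_ne vI 0 with rfl | hI
      · rw [if_pos rfl, mul_zero]
        simp only [hF_def]
        rw [if_pos (append_eq_zero_iff.mpr ⟨rfl, rfl⟩)]
      · rw [if_neg hI]
        simp only [hF_def]
        have hap : Fin.append vI (0 : Fin m → ℤ) ≠ 0 := fun h => hI (append_eq_zero_iff.mp h).1
        rw [if_neg hap, hwk, ← ENNReal.ofReal_mul (by positivity)]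
        apply ENNReal.ofReal_le_ofReal
        have hKnE : (0:ℝ) < (K:ℝ) * nE vI := mul_pos hK' (nE_pos hI)
        have h1 : ((K:ℝ) * nE vI) ^ (2*α) ≤
            euclNorm (aR vI 0) ^ (2*α) + euclNorm (bR 0) ^ (2*β) :=
          le_trans (Real.rpow_le_rpow hKnE.le (haLow0 vI) h2a0.le)
            (le_add_of_nonneg_right (Real.rpow_nonneg (euclNorm_nonneg _) _))
        calc (euclNorm (aR vI 0) ^ (2*α) + euclNorm (bR 0) ^ (2*β))⁻¹
            ≤ (((K:ℝ) * nE vI) ^ (2*α))⁻¹ := inv_anti₀ (Real.rpow_pos_of_pos hKnE _) h1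
          _ = (K:ℝ) ^ (-(2*α)) * nE vI ^ (-(2*α)) := by
              rw [Real.rpow_neg hK'.le, Real.rpow_neg (nE_nonneg vI),
                Real.mul_rpow hK'.le (nE_nonneg vI), mul_inv]
    have inner1 : ∀ vII : Fin m → ℤ, vII ≠ 0 →
        (∑' vI : Fin d → ℤ, F (Fin.append vI vII)) ≤
          ENNReal.ofReal ((L:ℝ) ^ (-(2*β))) * ENNReal.ofReal (nE vII ^ (-(2*β))) +
            ENNReal.ofReal ((K:ℝ) ^ (-p) * (L:ℝ) ^ (-q)) * Z d p *
              ENNReal.ofReal (nE vII ^ (-q)) := by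
      intro vII hII
      obtain ⟨nn, hnn⟩ := haLowN vII
      have hnEII : 0 < nE vII := nE_pos hII
      set T : ℝ := ((L:ℝ) * nE vII) ^ (2*β) with hT_def
      have hT : 0 < T := Real.rpow_pos_of_pos (mul_pos hL' hnEII) _
      set φ : (Fin d → ℤ) → ℝ≥0∞ :=
        fun w => ENNReal.ofReal ((((K:ℝ) * nE w) ^ (2*α) + T)⁻¹) with hphi_def
      have hgpos : ∀ w : Fin d → ℤ, (0:ℝ) < ((K:ℝ) * nE w) ^ (2*α) + T :=
        fun w => add_pos_of_nonneg_of_pos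
          (Real.rpow_nonneg (mul_nonneg hK'.le (nE_nonneg w)) _) hT
      have step_a : ∀ vI : Fin d → ℤ, F (Fin.append vI vII) ≤ φ (vI + nn) := by
        intro vI
        have hap : Fin.append vI vII ≠ 0 := fun h => hII (append_eq_zero_iff.mp h).2
        simp only [hF_def, hphi_def]
        rw [if_neg hap, hwk]
        apply ENNReal.ofReal_le_ofReal
        apply inv_anti₀ (hgpos (vI + nn))
        refine add_le_add ?_ ?_
        · exact Real.rpow_le_rpow (mul_nonneg hK'.le (nE_nonneg _)) (hnn vI) h2a0.le
        · exact Real.rpow_le_rpow (mul_nonneg hL'.le (nE_nonneg _)) (hbLow vII) h2b0.le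
      have hphi0 : φ 0 =
          ENNReal.ofReal ((L:ℝ) ^ (-(2*β))) * ENNReal.ofReal (nE vII ^ (-(2*β))) := by
        simp only [hphi_def]
        rw [nE_zero, mul_zero, Real.zero_rpow (ne_of_gt h2a0), zero_add, hT_def,
          ← Real.rpow_neg (mul_nonneg hL'.le hnEII.le),
          Real.mul_rpow hL'.le hnEII.le, ENNReal.ofReal_mul (by positivity)]
      have hwb : ∀ w : Fin d → ℤ, w ≠ 0 → φ w ≤
          ENNReal.ofReal ((K:ℝ) ^ (-p) * (L:ℝ) ^ (-q)) * ENNReal.ofReal (nE vII ^ (-q)) *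
            ENNReal.ofReal (nE w ^ (-p)) := by
        intro w hw
        simp only [hphi_def]
        rw [← ENNReal.ofReal_mul (by positivity), ← ENNReal.ofReal_mul (by positivity)]
        apply ENNReal.ofReal_le_ofReal
        set A : ℝ := ((K:ℝ) * nE w) ^ (2*α) with hA_def
        have hA : 0 < A := Real.rpow_pos_of_pos (mul_pos hK' (nE_pos hw)) _
        have hgeom : A ^ t * T ^ (1-t) ≤ A + T := geom_le hA.le hT.le ht0 ht1
        have hprodpos : 0 < A ^ t * T ^ (1-t) :=
          mul_pos (Real.rpow_pos_of_pos hA _) (Real.rpow_pos_of_pos hT _)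
        calc (A + T)⁻¹ ≤ (A ^ t * T ^ (1-t))⁻¹ := inv_anti₀ hprodpos hgeom
          _ = ((K:ℝ) ^ (-(2*α*t)) * nE w ^ (-(2*α*t))) *
              ((L:ℝ) ^ (-(2*β*(1-t))) * nE vII ^ (-(2*β*(1-t)))) := by
              rw [mul_inv, hA_def, hT_def, inv_rpow_rpow_split hK' (nE_pos hw),
                inv_rpow_rpow_split hL' hnEII]
          _ = (K:ℝ) ^ (-p) * (L:ℝ) ^ (-q) * nE vII ^ (-q) * nE w ^ (-p) := by
              rw [hp_def, hq_def]; ring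
      calc (∑' vI : Fin d → ℤ, F (Fin.append vI vII))
          ≤ ∑' vI : Fin d → ℤ, φ (vI + nn) := ENNReal.tsum_le_tsum step_a
        _ = ∑' w : Fin d → ℤ, φ w := (Equiv.addRight nn).tsum_eq φ
        _ = φ 0 + ∑' w : Fin d → ℤ, if w = 0 then 0 else φ w :=
            tsum_ite_zero φ 0
        _ ≤ ENNReal.ofReal ((L:ℝ) ^ (-(2*β))) * ENNReal.ofReal (nE vII ^ (-(2*β))) +
            (ENNReal.ofReal ((K:ℝ) ^ (-p) * (L:ℝ) ^ (-q)) * ENNReal.ofReal (nE vII ^ (-q))) *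
              Z d p := by
            refine add_le_add hphi0.le ?_
            rw [Z, ← ENNReal.tsum_mul_left]
            refine ENNReal.tsum_le_tsum fun w => ?_
            rcases eq_or_ne w 0 with rfl | hw
            · simp
            · rw [if_neg hw, if_neg hw]
              exact hwb w hw
        _ = ENNReal.ofReal ((L:ℝ) ^ (-(2*β))) * ENNReal.ofReal (nE vII ^ (-(2*β))) +
            ENNReal.ofReal ((K:ℝ) ^ (-p) * (L:ℝ) ^ (-q)) * Z d p *
              ENNReal.ofReal (nE vII ^ (-q)) := by ring
    have outer : (∑' (vII : Fin m → ℤ), ∑' (vI : Fin d → ℤ), F (Fin.append vI vII)) ≤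
        ENNReal.ofReal ((K:ℝ) ^ (-(2*α))) * Z d (2*α) +
          (ENNReal.ofReal ((L:ℝ) ^ (-(2*β))) * Z m (2*β) +
            ENNReal.ofReal ((K:ℝ) ^ (-p) * (L:ℝ) ^ (-q)) * (Z d p * Z m q)) := by
      rw [tsum_ite_zero (fun vII => ∑' vI : Fin d → ℤ, F (Fin.append vI vII)) 0]
      refine add_le_add inner0 ?_
      calc (∑' vII : Fin m → ℤ, if vII = 0 then 0 else ∑' vI : Fin d → ℤ, F (Fin.append vI vII))
          ≤ ∑' vII : Fin m → ℤ,
            (ENNReal.ofReal ((L:ℝ) ^ (-(2*β))) *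
                (if vII = 0 then 0 else ENNReal.ofReal (nE vII ^ (-(2*β)))) +
              (ENNReal.ofReal ((K:ℝ) ^ (-p) * (L:ℝ) ^ (-q)) * Z d p) *
                (if vII = 0 then 0 else ENNReal.ofReal (nE vII ^ (-q)))) := by
            refine ENNReal.tsum_le_tsum fun vII => ?_
            rcases eq_or_ne vII 0 with rfl | hII
            · simp
            · rw [if_neg hII, if_neg hII, if_neg hII]
              exact inner1 vII hII
        _ = ENNReal.ofReal ((L:ℝ) ^ (-(2*β))) * Z m (2*β) +
            (ENNReal.ofReal ((K:ℝ) ^ (-p) * (L:ℝ) ^ (-q)) * Z d p) * Z m q := by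
            rw [ENNReal.tsum_add, ENNReal.tsum_mul_left, ENNReal.tsum_mul_left]
            simp only [Z]
        _ = ENNReal.ofReal ((L:ℝ) ^ (-(2*β))) * Z m (2*β) +
            ENNReal.ofReal ((K:ℝ) ^ (-p) * (L:ℝ) ^ (-q)) * (Z d p * Z m q) := by ring
    have hXK : ENNReal.ofReal ((K:ℝ) ^ (-(2*α))) ≤ X :=
      ENNReal.ofReal_le_ofReal (le_add_of_nonneg_right (Real.rpow_nonneg hL'.le _))
    have hXL : ENNReal.ofReal ((L:ℝ) ^ (-(2*β))) ≤ X :=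
      ENNReal.ofReal_le_ofReal (le_add_of_nonneg_left (Real.rpow_nonneg hK'.le _))
    have hXKL : ENNReal.ofReal ((K:ℝ) ^ (-p) * (L:ℝ) ^ (-q)) ≤ X := by
      apply ENNReal.ofReal_le_ofReal
      calc (K:ℝ) ^ (-p) * (L:ℝ) ^ (-q)
          = ((K:ℝ) ^ (-(2*α))) ^ t * ((L:ℝ) ^ (-(2*β))) ^ (1-t) := by
            rw [← Real.rpow_mul hK'.le, ← Real.rpow_mul hL'.le,
              show -(2*α) * t = -p by rw [hp_def]; ring,
              show -(2*β) * (1-t) = -q by rw [hq_def]; ring]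
        _ ≤ (K:ℝ) ^ (-(2*α)) + (L:ℝ) ^ (-(2*β)) :=
            geom_le (Real.rpow_nonneg hK'.le _) (Real.rpow_nonneg hL'.le _) ht0 ht1
    have hE0le : E0 ≤ ENNReal.ofReal (E0.toReal + 1) := by
      conv_lhs => rw [← ENNReal.ofReal_toReal hE0]
      exact ENNReal.ofReal_le_ofReal (by linarith)
    calc (∑' v : {v : Fin (d + m) → ℤ // v ≠ 0},
        ENNReal.ofReal ((wMix d m Q α β (shiftIdx d m K L k v.1))⁻¹))
        = ∑' v, F v := step1
      _ = ∑' (vII : Fin m → ℤ), ∑' (vI : Fin d → ℤ), F (Fin.append vI vII) := step2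
      _ ≤ ENNReal.ofReal ((K:ℝ) ^ (-(2*α))) * Z d (2*α) +
          (ENNReal.ofReal ((L:ℝ) ^ (-(2*β))) * Z m (2*β) +
            ENNReal.ofReal ((K:ℝ) ^ (-p) * (L:ℝ) ^ (-q)) * (Z d p * Z m q)) := outer
      _ ≤ X * Z d (2*α) + (X * Z m (2*β) + X * (Z d p * Z m q)) :=
          add_le_add (mul_le_mul_left hXK _)
            (add_le_add (mul_le_mul_left hXL _) (mul_le_mul_left hXKL _))
      _ = X * E0 := by rw [hE0_def]; ring
      _ ≤ X * ENNReal.ofReal (E0.toReal + 1) := mul_le_mul_right hE0le _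
      _ = ENNReal.ofReal ((E0.toReal + 1) * ((K:ℝ) ^ (-(2 * α)) + (L:ℝ) ^ (-(2 * β)))) := by
          rw [ENNReal.ofReal_mul (by positivity), hX_def, mul_comm]
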